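/- Let (𝔤, ⟨·,·⟩) be a 2-step nilpotent metric Lie algebra admitting a strict conformal Killing-Yano tensor T with associated vector ξ. Then the center z(𝔤) of 𝔤 is 1-dimensional and spanned by ξ (so 𝔤 is isomorphic to a Heisenberg Lie algebra 𝔥_{2n+1}), T vanishes on z(𝔤), and there exists λ ≠ 0 such that on 𝔳 = z(𝔤)^⊥ one has T ∘ j(ξ) = λ·id_𝔳, where j(ξ) : 𝔳 → 𝔳 is the skew-symmetric endomorphism defined by ⟨j(ξ)x, y⟩ = ⟨ξ, [x, y]⟩ for x, y ∈ 𝔳. -/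

import Mathlib

section Defs

variable {g : Type*} [LieRing g] [LieAlgebra ℝ g]

/-- `B` is a (positive definite) inner product on the real Lie algebra `g`,
given as a bilinear form. -/
structure IsInnerProduct (B : g →ₗ[ℝ] g →ₗ[ℝ] ℝ) : Prop where
  symm : ∀ x y : g, B x y = B y x
  posdef : ∀ x : g, x ≠ 0 → 0 < B x x

/-- The Koszul formula characterizing the Levi-Civita connection of the metric Lie
algebra `(g, B)`: `2⟨∇ₓy, z⟩ = ⟨[x,y], z⟩ − ⟨[y,z], x⟩ + ⟨[z,x], y⟩`. -/
def IsLeviCivita (B : g →ₗ[ℝ] g →ₗ[ℝ] ℝ) (D : g → g → g) : Prop :=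
  ∀ x y z : g, 2 * B (D x y) z = B ⁅x, y⁆ z - B ⁅y, z⁆ x + B ⁅z, x⁆ y

/-- A skew-symmetric endomorphism with respect to `B`. -/
def IsSkewSymmetric (B : g →ₗ[ℝ] g →ₗ[ℝ] ℝ) (T : g →ₗ[ℝ] g) : Prop :=
  ∀ x y : g, B (T x) y = - B x (T y)

/-- The conformal Killing-Yano equation for an endomorphism `T` with associated 1-form `θ`:
`⟨(∇ₓT)y, z⟩ + ⟨(∇_yT)x, z⟩ = 2⟨x,y⟩θ(z) − ⟨y,z⟩θ(x) − ⟨x,z⟩θ(y)`,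
where `(∇ₓT)y = ∇ₓ(Ty) − T(∇ₓy)`. -/
def IsCKYWith (B : g →ₗ[ℝ] g →ₗ[ℝ] ℝ) (D : g → g → g) (T : g →ₗ[ℝ] g)
    (θ : g →ₗ[ℝ] ℝ) : Prop :=
  ∀ x y z : g,
    B (D x (T y) - T (D x y)) z + B (D y (T x) - T (D y x)) z =
      2 * B x y * θ z - B y z * θ x - B x z * θ y

/-- A Killing-Yano tensor is a CKY tensor with `θ = 0`. -/
def IsKY (B : g →ₗ[ℝ] g →ₗ[ℝ] ℝ) (D : g → g → g) (T : g →ₗ[ℝ] g) : Prop :=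
  IsCKYWith B D T 0

/-- A parallel tensor: `(∇ₓT)y = 0` for all `x, y`. -/
def IsParallelT (D : g → g → g) (T : g →ₗ[ℝ] g) : Prop :=
  ∀ x y : g, D x (T y) - T (D x y) = 0

/-- The orthogonal complement of a submodule with respect to the bilinear form `B`. -/
def orthComp (B : g →ₗ[ℝ] g →ₗ[ℝ] ℝ) (p : Submodule ℝ g) : Submodule ℝ g where
  carrier := {x : g | ∀ y ∈ p, B x y = 0}
  add_mem' := by
    intro a b ha hb y hy
    simp only [map_add, LinearMap.add_apply, ha y hy, hb y hy, add_zero]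
  zero_mem' := by
    intro y hy
    simp
  smul_mem' := by
    intro c a ha y hy
    simp only [map_smul, LinearMap.smul_apply, ha y hy, smul_eq_mul, mul_zero]

end Defs

/-- A 2-step nilpotent metric Lie algebra with a strict CKY tensor `T`
(associated vector `ξ`) has center spanned by `ξ` (so it is a Heisenberg Lie algebra),
`T` vanishes on the center, and on `𝔳 = z(𝔤)^⊥` one has `T ∘ j(ξ) = λ·id` for some
`λ ≠ 0`, where `j(ξ)` is defined by `⟨j(ξ)x, y⟩ = ⟨ξ, [x, y]⟩`. -/
theorem two_step_strict_cky_heisenberg {g : Type*} [LieRing g] [LieAlgebra ℝ g]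
    [FiniteDimensional ℝ g]
    (B : g →ₗ[ℝ] g →ₗ[ℝ] ℝ) (hB : IsInnerProduct B)
    (hnonab : ∃ x y : g, ⁅x, y⁆ ≠ 0)
    (h2step : ∀ x y z : g, ⁅x, ⁅y, z⁆⁆ = 0)
    (D : g → g → g) (hD : IsLeviCivita B D)
    (T : g →ₗ[ℝ] g) (hT : IsSkewSymmetric B T)
    (θ : g →ₗ[ℝ] ℝ) (hCKY : IsCKYWith B D T θ) (hθ : θ ≠ 0)
    (ξ : g) (hξ : ∀ x : g, θ x = B ξ x)
    (j : g →ₗ[ℝ] g)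
    (hjv : ∀ x ∈ orthComp B (LieAlgebra.center ℝ g).toSubmodule,
      j x ∈ orthComp B (LieAlgebra.center ℝ g).toSubmodule)
    (hj : ∀ x ∈ orthComp B (LieAlgebra.center ℝ g).toSubmodule,
      ∀ y ∈ orthComp B (LieAlgebra.center ℝ g).toSubmodule, B (j x) y = B ξ ⁅x, y⁆) :
    ξ ≠ 0 ∧
    (LieAlgebra.center ℝ g).toSubmodule = Submodule.span ℝ {ξ} ∧
    (∀ z ∈ LieAlgebra.center ℝ g, T z = 0) ∧
    (∃ lam : ℝ, lam ≠ 0 ∧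
      ∀ x ∈ orthComp B (LieAlgebra.center ℝ g).toSubmodule, T (j x) = lam • x) := by

  classical
  have hsy := hB.symm
  have hBxx0 : ∀ x : g, B x x = 0 → x = 0 := by
    intro x h
    by_contra hx
    exact absurd h (ne_of_gt (hB.posdef x hx))
  have hnd : ∀ x : g, (∀ y, B x y = 0) → x = 0 := fun x h => hBxx0 x (h x)
  have hBnd : LinearMap.BilinForm.Nondegenerate B :=
    ⟨fun m hm => hnd m hm, fun m hm => hnd m (fun y => by rw [hsy]; exact hm y)⟩
  have hRiesz : ∀ f : g →ₗ[ℝ] ℝ, ∃ w : g, ∀ y, B w y = f y := fun f =>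
    ⟨(LinearMap.BilinForm.toDual B hBnd).symm f,
      fun y => LinearMap.BilinForm.apply_toDual_symm_apply (hB := hBnd) f y⟩
  set Z := (LieAlgebra.center ℝ g).toSubmodule with hZdef
  set V := orthComp B Z with hVdef
  have hmemZ : ∀ x : g, x ∈ Z ↔ ∀ y : g, ⁅y, x⁆ = 0 := fun x =>
    LieModule.mem_maxTrivSubmodule ℝ g g x
  -- brackets with central elements vanish
  have hzc : ∀ c ∈ Z, ∀ y : g, ⁅y, c⁆ = 0 := fun c hc => (hmemZ c).mp hc
  have hzc' : ∀ c ∈ Z, ∀ y : g, ⁅c, y⁆ = 0 := by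
    intro c hc y
    rw [← lie_skew c y, hzc c hc y, neg_zero]
  -- all brackets are central (2-step)
  have hbrZ : ∀ a b : g, ⁅a, b⁆ ∈ Z := fun a b =>
    (hmemZ ⁅a, b⁆).mpr (fun y => h2step y a b)
  -- orthogonality facts
  have hVZ : ∀ v ∈ V, ∀ c ∈ Z, B v c = 0 := fun v hv => hv
  have hZV : ∀ c ∈ Z, ∀ v ∈ V, B c v = 0 := by
    intro c hc v hv
    rw [hsy]
    exact hv c hc
  have hVZ0 : ∀ v ∈ V, v ∈ Z → v = 0 := fun v hv hz => hBxx0 v (hv v hz)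
  have hndZ : ∀ c ∈ Z, (∀ z ∈ Z, B c z = 0) → c = 0 := fun c hc h => hBxx0 c (h c hc)
  -- orthogonal decomposition
  have hrefl : B.IsRefl := fun x y h => by rw [hsy]; exact h
  have horthV : LinearMap.BilinForm.orthogonal B Z = V := by
    ext m
    constructor
    · intro hm c hc
      rw [hsy]
      exact hm c hc
    · intro hm n hn
      show B n m = 0
      rw [hsy]
      exact hm n hn
  have hcompl : IsCompl Z (LinearMap.BilinForm.orthogonal B Z) := by
    rw [LinearMap.BilinForm.isCompl_orthogonal_iff_disjoint hrefl]
    rw [Submodule.disjoint_def]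
    intro x hxZ hxO
    exact hBxx0 x (hxO x hxZ)
  have hdecomp : ∀ x : g, ∃ c ∈ Z, ∃ v ∈ V, x = c + v := by
    intro x
    have hx : x ∈ Z ⊔ LinearMap.BilinForm.orthogonal B Z := by
      rw [hcompl.sup_eq_top]; trivial
    obtain ⟨c, hc, v, hv, h⟩ := Submodule.mem_sup.mp hx
    exact ⟨c, hc, v, horthV ▸ hv, h.symm⟩
  -- the master identity
  have star : ∀ x y z : g,
      B ⁅x, T y⁆ z + B ⁅y, T x⁆ z - B ⁅T y, z⁆ x - B ⁅T x, z⁆ y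
        + B ⁅z, x⁆ (T y) + B ⁅z, y⁆ (T x) - 2 * B ⁅y, T z⁆ x - 2 * B ⁅x, T z⁆ y
      = 4 * B x y * θ z - 2 * B y z * θ x - 2 * B x z * θ y := by
    intro x y z
    have h1 := hCKY x y z
    simp only [map_sub, LinearMap.sub_apply] at h1
    have h2 := hD x (T y) z
    have h3 := hD y (T x) z
    have h4 := hD x y (T z)
    have h5 := hD y x (T z)
    have s1 := hT (D x y) z
    have s2 := hT (D y x) z
    have e1 : B ⁅y, x⁆ (T z) = - B ⁅x, y⁆ (T z) := by
      rw [← lie_skew x y, map_neg, LinearMap.neg_apply]; ring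
    have e2 : B ⁅T z, x⁆ y = - B ⁅x, T z⁆ y := by
      rw [← lie_skew x (T z), map_neg, LinearMap.neg_apply]; ring
    have e3 : B ⁅T z, y⁆ x = - B ⁅y, T z⁆ x := by
      rw [← lie_skew y (T z), map_neg, LinearMap.neg_apply]; ring
    linear_combination 2 * h1 - h2 - h3 + 2 * s1 + 2 * s2 - h4 - h5 - e1 - e2 - e3
  -- B applied to a zero bracket
  have hB0 : ∀ a : g, a = 0 → ∀ b : g, B a b = 0 := by
    intro a ha b; rw [ha]; simp
  have hB0' : ∀ b a : g, a = 0 → B b a = 0 := by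
    intro b a ha; rw [ha]; simp
  -- (E6) : for x, z central, y arbitrary
  have hE6 : ∀ x ∈ Z, ∀ z ∈ Z, ∀ y : g,
      B ⁅y, T x⁆ z = 2 * B x z * θ y - 2 * B y z * θ x := by
    intro x hx z hz y
    have s1 := star x y z
    rw [hB0 _ (hzc' x hx (T y)) z, hB0 _ (hzc z hz (T y)) x, hB0 _ (hzc z hz (T x)) y,
      hB0 _ (hzc x hx z) (T y), hB0 _ (hzc' z hz y) (T x), hB0 _ (hzc' x hx (T z)) y] at s1
    have s2 := star z y x
    rw [hB0 _ (hzc' z hz (T y)) x, hB0 _ (hzc x hx (T y)) z, hB0 _ (hzc x hx (T z)) y,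
      hB0 _ (hzc z hz x) (T y), hB0 _ (hzc' x hx y) (T z), hB0 _ (hzc' z hz (T x)) y] at s2
    have y1 := hsy z y
    have y2 := hsy y x
    have y3 := hsy z x
    linear_combination (-1/3 : ℝ) * s1 + (-2/3 : ℝ) * s2 - (8/3 : ℝ) * θ x * y1
      + (4/3 : ℝ) * θ z * y2 + (4/3 : ℝ) * θ y * y3
  -- (E3) : all central
  have hE3 : ∀ x ∈ Z, ∀ z ∈ Z, B x x * θ z = B x z * θ x := by
    intro x hx z hz
    have s1 := star x x z
    rw [hB0 _ (hzc' x hx (T x)) z, hB0 _ (hzc z hz (T x)) x,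
      hB0 _ (hzc x hx z) (T x), hB0 _ (hzc' x hx (T z)) x] at s1
    linear_combination (-1/4 : ℝ) * s1
  -- (EI) : x, y in V, z central
  have hEI : ∀ x ∈ V, ∀ y ∈ V, ∀ z ∈ Z,
      B ⁅x, T y⁆ z + B ⁅y, T x⁆ z = 4 * B x y * θ z := by
    intro x hx y hy z hz
    have s1 := star x y z
    rw [hB0 _ (hzc z hz (T y)) x, hB0 _ (hzc z hz (T x)) y,
      hB0 _ (hzc' z hz x) (T y), hB0 _ (hzc' z hz y) (T x),
      hZV _ (hbrZ y (T z)) x hx, hZV _ (hbrZ x (T z)) y hy,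
      hVZ y hy z hz, hVZ x hx z hz] at s1
    linear_combination s1
  -- (E11) : x central, y, z in V
  have hE11 : ∀ x ∈ Z, ∀ y ∈ V, ∀ z ∈ V,
      - B ⁅T y, z⁆ x + B ⁅z, y⁆ (T x) - 2 * B ⁅y, T z⁆ x = -2 * B y z * θ x := by
    intro x hx y hy z hz
    have s1 := star x y z
    rw [hB0 _ (hzc' x hx (T y)) z, hB0 _ (hzc x hx z) (T y), hB0 _ (hzc' x hx (T z)) y,
      hZV _ (hbrZ y (T x)) z hz, hZV _ (hbrZ (T x) z) y hy,
      hZV x hx y hy, hZV x hx z hz] at s1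
    linear_combination s1
  -- (E10) : all in V
  have hE10 : ∀ x ∈ V, ∀ y ∈ V, ∀ t ∈ V,
      B (T y) ⁅x, t⁆ + B (T x) ⁅y, t⁆
        = -4 * B x y * θ t + 2 * θ x * B y t + 2 * θ y * B x t := by
    intro x hx y hy t ht
    have s1 := star x y t
    rw [hZV _ (hbrZ x (T y)) t ht, hZV _ (hbrZ y (T x)) t ht,
      hZV _ (hbrZ (T y) t) x hx, hZV _ (hbrZ (T x) t) y hy,
      hZV _ (hbrZ y (T t)) x hx, hZV _ (hbrZ x (T t)) y hy] at s1
    have c1 : B ⁅t, x⁆ (T y) = - B (T y) ⁅x, t⁆ := by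
      rw [hsy ⁅t, x⁆ (T y), ← lie_skew x t, map_neg]; ring
    have c2 : B ⁅t, y⁆ (T x) = - B (T x) ⁅y, t⁆ := by
      rw [hsy ⁅t, y⁆ (T x), ← lie_skew y t, map_neg]; ring
    linear_combination - s1 + c1 + c2
  -- STEP A : θ vanishes on V
  have hθV : ∀ v ∈ V, θ v = 0 := by
    intro v hv
    by_contra hθv
    have hz0 : ∀ z ∈ Z, ∀ y : g, B z ⁅v, y⁆ = 0 := by
      intro z hz
      obtain ⟨w, hw⟩ := hRiesz ((B z).comp (LieAlgebra.ad ℝ g v))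
      have hw' : ∀ y : g, B w y = B z ⁅v, y⁆ := by
        intro y
        rw [hw]
        simp [LieAlgebra.ad_apply]
      have hwV : w ∈ V := by
        intro c hc
        rw [hw' c, hzc c hc v]
        simp
      have hwv : B w v = 0 := by
        rw [hw' v, lie_self]
        simp
      have hA1 : ∀ c ∈ Z, B (T w) c = -2 * θ v * B z c := by
        intro c hc
        have h1 := hT w c
        rw [hw' (T c)] at h1
        have h2 := hE6 c hc z hz v
        have h3 : B v z = 0 := hVZ v hv z hz
        have h4 := hsy z ⁅v, T c⁆
        have h5 := hsy c z
        linear_combination h1 - h4 - h2 - 2 * θ v * h5 + 2 * θ c * h3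
      have h10 := hE10 w hwV v hv w hwV
      rw [lie_self, hB0' (T v) 0 rfl] at h10
      have hA := hA1 ⁅v, w⁆ (hbrZ v w)
      have hzv : B z ⁅v, w⁆ = B w w := (hw' w).symm
      have hvw : B v w = 0 := by rw [hsy]; exact hwv
      have hkey : (4 * θ v) * B w w = 0 := by
        linear_combination hA - h10 - 2 * θ v * hzv - 2 * θ w * hvw + 4 * θ w * hwv
      have hww : B w w = 0 :=
        (mul_eq_zero.mp hkey).resolve_left (mul_ne_zero four_ne_zero hθv)
      have hw0 : w = 0 := hBxx0 w hww
      intro y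
      rw [← hw' y, hw0]
      simp
    have hcentral : ∀ y : g, ⁅v, y⁆ = 0 := by
      intro y
      exact hBxx0 _ (hz0 ⁅v, y⁆ (hbrZ v y) y)
    have hvZ : v ∈ Z := (hmemZ v).mpr (by
      intro y
      rw [← lie_skew y v, hcentral y, neg_zero])
    have : v = 0 := hVZ0 v hv hvZ
    rw [this] at hθv
    exact hθv (map_zero θ)
  -- ξ is central
  have hξZ : ξ ∈ Z := by
    obtain ⟨c, hc, u, hu, h⟩ := hdecomp ξ
    have h1 : B ξ u = 0 := by rw [← hξ u]; exact hθV u hu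
    rw [h] at h1
    simp only [map_add, LinearMap.add_apply] at h1
    have h2 : B c u = 0 := hZV c hc u hu
    have hu0 : u = 0 := hBxx0 u (by linarith)
    rw [h, hu0, add_zero]
    exact hc
  -- ξ ≠ 0
  have hξne : ξ ≠ 0 := by
    intro h0
    apply hθ
    ext x
    rw [hξ x, h0]
    simp
  have hBξξ : 0 < B ξ ξ := hB.posdef ξ hξne
  -- STEP C : the center is spanned by ξ
  have hZspan : Z = Submodule.span ℝ {ξ} := by
    apply le_antisymm
    · intro c hc
      rw [Submodule.mem_span_singleton]
      by_cases hc0 : c = 0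
      · exact ⟨0, by rw [hc0, zero_smul]⟩
      have hkey : (B c c) • ξ - (B ξ c) • c = 0 := by
        apply hnd
        intro y
        obtain ⟨cz, hcz, v, hv, rfl⟩ := hdecomp y
        have h1 : B ξ v = 0 := by rw [← hξ v]; exact hθV v hv
        have h2 : B c v = 0 := hZV c hc v hv
        have h3 := hE3 c hc cz hcz
        rw [hξ cz, hξ c] at h3
        have h4 := hsy ξ cz
        have h5 := hsy c cz
        simp only [map_sub, map_smul, LinearMap.sub_apply, LinearMap.smul_apply,
          map_add, LinearMap.add_apply, smul_eq_mul]
        linear_combination h3 + B c c * h1 - B ξ c * h2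
      have hkey' : (B c c) • ξ = (B ξ c) • c := by
        rw [← sub_eq_zero]; exact hkey
      have hbxc : B ξ c ≠ 0 := by
        intro h0
        rw [h0, zero_smul] at hkey'
        rcases smul_eq_zero.mp hkey' with h | h
        · exact hc0 (hBxx0 c h)
        · exact hξne h
      refine ⟨B c c / B ξ c, ?_⟩
      have hthis : (B ξ c)⁻¹ • ((B ξ c) • c) = (B ξ c)⁻¹ • ((B c c) • ξ) := by rw [hkey']
      rw [smul_smul, smul_smul, inv_mul_cancel₀ hbxc, one_smul] at hthis
      rw [div_eq_inv_mul]
      exact hthis.symm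
    · rw [Submodule.span_le, Set.singleton_subset_iff]
      exact hξZ
  -- STEP D : T kills ξ
  have hTξ : T ξ = 0 := by
    have hTξZ : T ξ ∈ Z := by
      apply (hmemZ (T ξ)).mpr
      intro y
      obtain ⟨c, hc, v, hv, rfl⟩ := hdecomp y
      have hbv : ⁅v, T ξ⁆ = 0 := by
        apply hndZ _ (hbrZ v (T ξ))
        intro z hz
        have h2 := hE6 ξ hξZ z hz v
        rw [hθV v hv, hVZ v hv z hz] at h2
        linear_combination h2
      rw [add_lie, hzc' c hc (T ξ), hbv, add_zero]
    rw [hZspan] at hTξZ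
    obtain ⟨a, ha⟩ := Submodule.mem_span_singleton.mp hTξZ
    have h0 : B (T ξ) ξ = 0 := by
      have h1 := hT ξ ξ
      have h2 := hsy (T ξ) ξ
      linarith
    rw [← ha] at h0
    simp only [map_smul, LinearMap.smul_apply, smul_eq_mul] at h0
    have ha0 : a = 0 := by
      rcases mul_eq_zero.mp h0 with h | h
      · exact h
      · exact absurd h (ne_of_gt hBξξ)
    rw [← ha, ha0, zero_smul]
  -- T kills the center
  have hTZ : ∀ c ∈ Z, T c = 0 := by
    intro c hc
    rw [hZspan] at hc
    obtain ⟨a, ha⟩ := Submodule.mem_span_singleton.mp hc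
    rw [← ha, map_smul, hTξ, smul_zero]
  -- STEP E : T ∘ j = -2⟨ξ,ξ⟩ id on V
  have hjall : ∀ x ∈ V, ∀ t : g, B (j x) t = B ξ ⁅x, t⁆ := by
    intro x hx t
    obtain ⟨c, hc, v, hv, rfl⟩ := hdecomp t
    have h1 : B (j x) c = 0 := hVZ _ (hjv x hx) c hc
    have h2 : ⁅x, c⁆ = 0 := hzc c hc x
    rw [lie_add, h2, zero_add, map_add, h1, zero_add, hj x hx v hv]
  have hkeyE : ∀ x ∈ V, ∀ y ∈ V, B (T (j x)) y = -2 * B ξ ξ * B x y := by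
    intro x hx y hy
    have e1 := hE11 ξ hξZ y hy x hx
    have e2 := hE11 ξ hξZ x hx y hy
    rw [hTξ, hB0' ⁅x, y⁆ 0 rfl] at e1
    rw [hTξ, hB0' ⁅y, x⁆ 0 rfl] at e2
    -- conversions
    have c1 : B ⁅x, T y⁆ ξ = - B (T (j x)) y := by
      rw [hsy ⁅x, T y⁆ ξ, ← hjall x hx (T y)]
      linear_combination hT (j x) y
    have c2 : B ⁅y, T x⁆ ξ = - B (T (j y)) x := by
      rw [hsy ⁅y, T x⁆ ξ, ← hjall y hy (T x)]
      linear_combination hT (j y) x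
    have d1 : B ⁅T y, x⁆ ξ = - B ⁅x, T y⁆ ξ := by
      rw [← lie_skew x (T y), map_neg, LinearMap.neg_apply]; ring
    have d2 : B ⁅T x, y⁆ ξ = - B ⁅y, T x⁆ ξ := by
      rw [← lie_skew y (T x), map_neg, LinearMap.neg_apply]; ring
    have hθξ : θ ξ = B ξ ξ := hξ ξ
    have hyx := hsy y x
    -- e1 : - B ⁅T y, x⁆ ξ - 2 * B ⁅y, T x⁆ ξ = -2 * B y x * θ ξ
    -- e2 : - B ⁅T x, y⁆ ξ - 2 * B ⁅x, T y⁆ ξ = -2 * B x y * θ ξ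
    -- with U := B(T(jx))y, W := B(T(jy))x : e1 ⇒ U + 2W = -2 B x y θξ ; e2 ⇒ W + 2U = -2 B x y θξ
    linear_combination (1/3 : ℝ) * e1 + (2/3 : ℝ) * e2 + (1/3 : ℝ) * d1 + (2/3 : ℝ) * d2
      + c1 - (2/3 : ℝ) * θ ξ * hyx - 2 * B x y * hθξ
  refine ⟨hξne, hZspan, ?_, ⟨-2 * B ξ ξ, ?_, ?_⟩⟩
  · intro c hc
    exact hTZ c hc
  · exact mul_ne_zero (by norm_num) (ne_of_gt hBξξ)
  · intro x hx
    have hall : ∀ y : g, B (T (j x) - (-2 * B ξ ξ) • x) y = 0 := by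
      intro y
      obtain ⟨c, hc, v, hv, rfl⟩ := hdecomp y
      have k1 := hkeyE x hx v hv
      have k2 : B (T (j x)) c = 0 := by
        have h1 := hT (j x) c
        rw [hTZ c hc] at h1
        simpa using h1
      have k3 : B x c = 0 := hVZ x hx c hc
      simp only [map_sub, map_smul, LinearMap.sub_apply, LinearMap.smul_apply,
        map_add, LinearMap.add_apply, smul_eq_mul]
      linear_combination k1 + k2 - (-2 * B ξ ξ) * k3
    have := hnd _ hall
    rwa [sub_eq_zero] at this
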